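/- Let (X,J,ω) be a closed 2n-dimensional almost Kähler manifold. If X belongs to the class M(k,c) for a sufficiently large uniform constant c > 0 (c > 20 suffices), then the d-harmonic k-forms admit a Hodge decomposition: H^k_d(X) = ⊕_{p+q=k} H^{p,q}_d(X). -/

import Mathlib

open scoped ComplexInnerProductSpace

/-- `lap a b = a ∘ b + b ∘ a`; with `b` the formal adjoint of `a` this is the
Laplacian `Δ_a`, and for two odd operators it is their graded commutator. -/
def lap {V : Type*} [AddCommGroup V] [Module ℂ V] (a b : V →ₗ[ℂ] V) : V →ₗ[ℂ] V :=
  a ∘ₗ b + b ∘ₗ a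

section helpers
variable {V : Type*} [NormedAddCommGroup V] [InnerProductSpace ℂ V]

lemma adj_flip (u us : V →ₗ[ℂ] V) (h : ∀ x y : V, ⟪u x, y⟫ = ⟪x, us y⟫) :
    ∀ x y : V, ⟪us x, y⟫ = ⟪x, u y⟫ := by
  intro x y
  rw [← inner_conj_symm, ← h y x, inner_conj_symm]

lemma lap_pair (u v us vs : V →ₗ[ℂ] V)
    (hu : ∀ x y : V, ⟪u x, y⟫ = ⟪x, us y⟫) (hv : ∀ x y : V, ⟪v x, y⟫ = ⟪x, vs y⟫)
    (x y : V) : ⟪(lap u v) x, y⟫ = ⟪v x, us y⟫ + ⟪u x, vs y⟫ := by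
  simp [lap, LinearMap.add_apply, LinearMap.comp_apply, inner_add_left, hu, hv]

lemma resym (x y : V) : (⟪x, y⟫).re = (⟪y, x⟫).re := by
  simpa using inner_re_symm (𝕜 := ℂ) x y

lemma key_id (p q r s : V) (h : p + q + r + s = 0) :
    (⟪p,p⟫.re + ⟪q,q⟫.re + ⟪r,r⟫.re + ⟪s,s⟫.re)
      + 2*(⟪s,q⟫.re + ⟪p,r⟫.re + 2*⟪r,s⟫.re + 2*⟪p,q⟫.re)
    = 2*(⟪r,r⟫.re - ⟪p,p⟫.re - 2*⟪s,p⟫.re + 2*⟪s,r⟫.re) := by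
  have hs : s = -p - q - r := by
    have h2 : s = -(p + q + r) := by
      apply eq_neg_of_add_eq_zero_left
      rw [← h]; abel
    rw [h2]; abel
  subst hs
  simp only [inner_add_left, inner_add_right, inner_sub_left, inner_sub_right,
    inner_neg_left, inner_neg_right, Complex.add_re, Complex.sub_re, Complex.neg_re]
  have e1 := resym p q
  have e2 := resym p r
  have e3 := resym q r
  ring_nf
  linarith

lemma cre (x : V) : (⟪x, x⟫ : ℂ).re = ‖x‖^2 := by
  simpa using inner_self_eq_norm_sq (𝕜 := ℂ) x

end helpers

set_option maxHeartbeats 1000000 in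
/-- Hodge decomposition of `d`-harmonic `k`-forms on a closed
`2n`-dimensional almost Kähler manifold `X ∈ M(k,c)` for a sufficiently large
uniform constant `c > 0` (`c > 20` suffices): `H^k_d = ⊕_{p+q=k} H^{p,q}_d`. -/
theorem stmt_6 {V : Type*} [NormedAddCommGroup V] [InnerProductSpace ℂ V]
    (Ω : ℤ × ℤ → Submodule ℂ V)
    (hInternal : DirectSum.IsInternal Ω)
    (mu pa pb mub mus pas pbs mubs : V →ₗ[ℂ] V)
    (hadj_mu : ∀ x y : V, ⟪mu x, y⟫ = ⟪x, mus y⟫)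
    (hadj_pa : ∀ x y : V, ⟪pa x, y⟫ = ⟪x, pas y⟫)
    (hadj_pb : ∀ x y : V, ⟪pb x, y⟫ = ⟪x, pbs y⟫)
    (hadj_mub : ∀ x y : V, ⟪mub x, y⟫ = ⟪x, mubs y⟫)
    (hmap_mu : ∀ p q : ℤ, ∀ x ∈ Ω (p, q), mu x ∈ Ω (p + 2, q - 1))
    (hmap_pa : ∀ p q : ℤ, ∀ x ∈ Ω (p, q), pa x ∈ Ω (p + 1, q))
    (hmap_pb : ∀ p q : ℤ, ∀ x ∈ Ω (p, q), pb x ∈ Ω (p, q + 1))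
    (hmap_mub : ∀ p q : ℤ, ∀ x ∈ Ω (p, q), mub x ∈ Ω (p - 1, q + 2))
    (d ds : V →ₗ[ℂ] V)
    (hd : d = mu + pa + pb + mub)
    (hds : ds = mus + pas + pbs + mubs)
    (hDelta : lap d ds =
      lap pb pbs + lap pa pas + lap mu mus + lap mub mubs +
        (2 : ℂ) • (lap mub pas + lap mu pbs + lap mubs pb +
          lap mu pas + lap mus pa + lap mub pbs))
    (hT3 : ∀ p q : ℤ, LinearMap.ker (lap d ds) ⊓ Ω (p, q) =
      LinearMap.ker (lap pb pbs) ⊓ LinearMap.ker (lap mu mus) ⊓ Ω (p, q))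
    (n k : ℤ) (hn : 0 < n) (hk : 0 < k) (hkn : k ≤ n)
    (hdim : ∀ p q : ℤ, p < 0 ∨ q < 0 ∨ n < p ∨ n < q → Ω (p, q) = ⊥)
    (c : ℝ) (hc : 20 < c)
    (Hsum : Submodule ℂ V)
    (hHsum : Hsum = ⨆ p : ℤ, (LinearMap.ker (lap d ds) ⊓ Ω (p, k - p)))
    (hvanish : ∀ x ∈ Hsum, mu x = 0 ∧ mus x = 0 ∧ mub x = 0 ∧ mubs x = 0 ∧
      pa x = 0 ∧ pas x = 0 ∧ pb x = 0 ∧ pbs x = 0)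
    (hPdec : ∀ a ∈ (⨆ p : ℤ, Ω (p, k - p) : Submodule ℂ V), ∃ h b : V,
      h ∈ Hsum ∧ b ∈ Hsumᗮ ∧ b ∈ LinearMap.range (lap pb pbs + lap mu mus) ∧ a = h + b)
    (hM : ∀ α ∈ Hsumᗮ,
      c * (⟪(lap mu mus + lap mub mubs) α, α⟫).re ≤
        (⟪(lap pb pbs + lap mu mus) α, α⟫).re) :
    LinearMap.ker (lap d ds) ⊓ (⨆ p : ℤ, Ω (p, k - p)) =
      ⨆ p : ℤ, (LinearMap.ker (lap d ds) ⊓ Ω (p, k - p)) := by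
  -- derived adjoints
  have hadj_mus := adj_flip mu mus hadj_mu
  have hadj_pas := adj_flip pa pas hadj_pa
  have hadj_pbs := adj_flip pb pbs hadj_pb
  have hadj_mubs := adj_flip mub mubs hadj_mub
  have had : ∀ x y : V, ⟪d x, y⟫ = ⟪x, ds y⟫ := by
    intro x y
    rw [hd, hds]
    simp [LinearMap.add_apply, inner_add_left, inner_add_right,
      hadj_mu, hadj_pa, hadj_pb, hadj_mub]
  have hads := adj_flip d ds had
  refine le_antisymm ?_ (iSup_le fun p => le_inf inf_le_left
    (inf_le_right.trans (le_iSup (fun p => Ω (p, k - p)) p)))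
  intro x hx
  obtain ⟨hx1, hx2⟩ := Submodule.mem_inf.mp hx
  obtain ⟨h, b, hh, hbperp, ⟨y, hy⟩, hxe⟩ := hPdec x hx2
  obtain ⟨v1, v2, v3, v4, v5, v6, v7, v8⟩ := hvanish h hh
  -- Δ h = 0
  have hdh : d h = 0 := by rw [hd]; simp [LinearMap.add_apply, v1, v3, v5, v7]
  have hdsh : ds h = 0 := by rw [hds]; simp [LinearMap.add_apply, v2, v4, v6, v8]
  have hDh : lap d ds h = 0 := by
    simp [lap, LinearMap.add_apply, LinearMap.comp_apply, hdh, hdsh]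
  have hDx : lap d ds x = 0 := LinearMap.mem_ker.mp hx1
  have hDb : lap d ds b = 0 := by
    have h2 := congrArg (lap d ds) hxe
    rw [map_add, hDh, zero_add, hDx] at h2
    exact h2.symm
  -- d b = 0 and ds b = 0
  have hdbpair : ⟪ds b, ds b⟫ + ⟪d b, d b⟫ = 0 := by
    have h3 : ⟪(lap d ds) b, b⟫ = 0 := by rw [hDb, inner_zero_left]
    rw [lap_pair d ds ds d had hads b b] at h3
    exact h3
  have hdb : d b = 0 ∧ ds b = 0 := by
    have h4 : (‖ds b‖:ℝ)^2 + ‖d b‖^2 = 0 := by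
      have := congrArg Complex.re hdbpair
      simp only [Complex.add_re, cre, Complex.zero_re] at this
      exact this
    constructor
    · rw [← norm_eq_zero]
      nlinarith [sq_nonneg ‖d b‖, sq_nonneg ‖ds b‖]
    · rw [← norm_eq_zero]
      nlinarith [sq_nonneg ‖d b‖, sq_nonneg ‖ds b‖]
  have hsum1 : mu b + pa b + pb b + mub b = 0 := by
    have := congrArg (fun L : V →ₗ[ℂ] V => L b) hd
    simp only [LinearMap.add_apply] at this
    rw [← this, hdb.1]
  have hsum2 : mus b + pas b + pbs b + mubs b = 0 := by
    have := congrArg (fun L : V →ₗ[ℂ] V => L b) hds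
    simp only [LinearMap.add_apply] at this
    rw [← this, hdb.2]
  -- expansion of the Laplacian pairing
  have hexp : (0:ℝ) =
      (‖pbs b‖^2 + ‖pb b‖^2) + (‖pas b‖^2 + ‖pa b‖^2) + (‖mus b‖^2 + ‖mu b‖^2)
        + (‖mubs b‖^2 + ‖mub b‖^2)
      + 2*((⟪pas b, mubs b⟫.re + ⟪mub b, pa b⟫.re) + (⟪pbs b, mus b⟫.re + ⟪mu b, pb b⟫.re)
        + (⟪pb b, mub b⟫.re + ⟪mubs b, pbs b⟫.re) + (⟪pas b, mus b⟫.re + ⟪mu b, pa b⟫.re)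
        + (⟪pa b, mu b⟫.re + ⟪mus b, pas b⟫.re) + (⟪pbs b, mubs b⟫.re + ⟪mub b, pb b⟫.re)) := by
    have h5 := congrArg (fun L : V →ₗ[ℂ] V => (⟪L b, b⟫ : ℂ)) hDelta
    simp only [LinearMap.add_apply, LinearMap.smul_apply, inner_add_left, inner_smul_left] at h5
    rw [lap_pair pb pbs pbs pb hadj_pb hadj_pbs b b,
        lap_pair pa pas pas pa hadj_pa hadj_pas b b,
        lap_pair mu mus mus mu hadj_mu hadj_mus b b,
        lap_pair mub mubs mubs mub hadj_mub hadj_mubs b b,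
        lap_pair mub pas mubs pa hadj_mub hadj_pas b b,
        lap_pair mu pbs mus pb hadj_mu hadj_pbs b b,
        lap_pair mubs pb mub pbs hadj_mubs hadj_pb b b,
        lap_pair mu pas mus pa hadj_mu hadj_pas b b,
        lap_pair mus pa mu pas hadj_mus hadj_pa b b,
        lap_pair mub pbs mubs pb hadj_mub hadj_pbs b b] at h5
    have h6 : ⟪(lap d ds) b, b⟫ = 0 := by rw [hDb, inner_zero_left]
    rw [h6] at h5
    rw [show ((starRingEnd ℂ) 2 : ℂ) = 2 from map_ofNat _ 2] at h5
    have h7 := congrArg Complex.re h5.symm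
    simp only [Complex.add_re, Complex.mul_re, Complex.zero_re, Complex.re_ofNat,
      Complex.im_ofNat, cre] at h7
    linarith [h7]
  -- the key identities
  have hk1 := key_id (mu b) (pa b) (pb b) (mub b) hsum1
  have hk2 := key_id (mus b) (pas b) (pbs b) (mubs b) hsum2
  simp only [cre] at hk1 hk2
  have hE : (‖pb b‖^2 + ‖pbs b‖^2) - (‖mu b‖^2 + ‖mus b‖^2)
      = 2*(⟪mub b, mu b⟫.re + ⟪mubs b, mus b⟫.re)
        - 2*(⟪mub b, pb b⟫.re + ⟪mubs b, pbs b⟫.re) := by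
    have e1 := resym (pa b) (mu b)
    have e2 := resym (mub b) (pb b)
    have e3 := resym (pas b) (mubs b)
    have e4 := resym (pbs b) (mus b)
    have e5 := resym (mubs b) (pbs b)
    have e6 := resym (pas b) (mus b)
    linarith [hk1, hk2, hexp, e1, e2, e3, e4, e5, e6]
  -- the M(k,c) inequality, expanded
  have hMr : c * ((‖mus b‖^2 + ‖mu b‖^2) + (‖mubs b‖^2 + ‖mub b‖^2))
      ≤ (‖pbs b‖^2 + ‖pb b‖^2) + (‖mus b‖^2 + ‖mu b‖^2) := by
    have hMb := hM b hbperp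
    rw [LinearMap.add_apply, LinearMap.add_apply, inner_add_left, inner_add_left,
      lap_pair mu mus mus mu hadj_mu hadj_mus b b,
      lap_pair mub mubs mubs mub hadj_mub hadj_mubs b b,
      lap_pair pb pbs pbs pb hadj_pb hadj_pbs b b] at hMb
    simpa only [Complex.add_re, cre] using hMb
  -- Cauchy-Schwarz bounds
  have csb : ∀ u v : V, |(⟪u, v⟫ : ℂ).re| ≤ ‖u‖ * ‖v‖ := by
    intro u v
    calc |(⟪u, v⟫ : ℂ).re| ≤ ‖(⟪u, v⟫ : ℂ)‖ := by simpa using Complex.abs_re_le_norm ⟪u, v⟫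
      _ ≤ ‖u‖ * ‖v‖ := norm_inner_le_norm u v
  obtain ⟨cs1a, cs1b⟩ := abs_le.mp (csb (mub b) (mu b))
  obtain ⟨cs2a, cs2b⟩ := abs_le.mp (csb (mubs b) (mus b))
  obtain ⟨cs3a, cs3b⟩ := abs_le.mp (csb (mub b) (pb b))
  obtain ⟨cs4a, cs4b⟩ := abs_le.mp (csb (mubs b) (pbs b))
  -- scalar endgame
  set x1 : ℝ := ‖mu b‖ with hx1
  set x2 : ℝ := ‖mus b‖ with hx2
  set z1 : ℝ := ‖pb b‖ with hz1
  set z2 : ℝ := ‖pbs b‖ with hz2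
  set w1 : ℝ := ‖mub b‖ with hw1
  set w2 : ℝ := ‖mubs b‖ with hw2
  set g1 : ℝ := (⟪mub b, mu b⟫ : ℂ).re with hg1
  set g2 : ℝ := (⟪mubs b, mus b⟫ : ℂ).re with hg2
  set g3 : ℝ := (⟪mub b, pb b⟫ : ℂ).re with hg3
  set g4 : ℝ := (⟪mubs b, pbs b⟫ : ℂ).re with hg4
  have hc20 : (0:ℝ) ≤ c - 20 := by linarith
  have nnA : (0:ℝ) ≤ x1^2 + x2^2 := by positivity
  have nnC : (0:ℝ) ≤ w1^2 + w2^2 := by positivity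
  have hA : 19 * (x1^2 + x2^2) ≤ z1^2 + z2^2 := by
    nlinarith only [hMr, mul_nonneg hc20 nnA, mul_nonneg hc20 nnC, nnA, nnC]
  have hC : 20 * (w1^2 + w2^2) ≤ (z1^2 + z2^2) + (x1^2 + x2^2) := by
    nlinarith only [hMr, mul_nonneg hc20 nnA, mul_nonneg hc20 nnC, nnA, nnC]
  have hB : z1^2 + z2^2 ≤ 0 := by
    nlinarith only [hE, hA, hC, cs1b, cs2b, cs3a, cs4a,
      sq_nonneg (2*w1 - x1/2), sq_nonneg (2*w2 - x2/2),
      sq_nonneg (2*w1 - z1/2), sq_nonneg (2*w2 - z2/2)]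
  have nz : ∀ u : V, ‖u‖^2 ≤ 0 → u = 0 := by
    intro u hu
    have h0 : ‖u‖^2 = 0 := le_antisymm hu (sq_nonneg _)
    exact norm_eq_zero.mp (by nlinarith only [h0, norm_nonneg u] : ‖u‖ = 0)
  have hpb0 : pb b = 0 := nz _ (by rw [← hz1]; nlinarith only [hB, sq_nonneg z2])
  have hpbs0 : pbs b = 0 := nz _ (by rw [← hz2]; nlinarith only [hB, sq_nonneg z1])
  have hmu0 : mu b = 0 := nz _ (by rw [← hx1]; nlinarith only [sq_nonneg x2, hA, hB])
  have hmus0 : mus b = 0 := nz _ (by rw [← hx2]; nlinarith only [sq_nonneg x1, hA, hB])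
  -- conclude b = 0
  have hLyb : (⟪(lap pb pbs + lap mu mus) y, b⟫ : ℂ) = 0 := by
    rw [LinearMap.add_apply, inner_add_left,
      lap_pair pb pbs pbs pb hadj_pb hadj_pbs y b,
      lap_pair mu mus mus mu hadj_mu hadj_mus y b,
      hpb0, hpbs0, hmu0, hmus0]
    simp
  have hbb : (⟪b, b⟫ : ℂ) = 0 := hy ▸ hLyb
  have hb0 : b = 0 := inner_self_eq_zero.mp hbb
  have hxh : x = h := by rw [hxe, hb0, add_zero]
  rw [hxh]
  exact hHsum ▸ hh
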